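/- For n ∈ ℕ and t > 0, the Gaussian Hankel-type integral satisfies ∫_{ℝ^n} ∏_{i<j} (λ_i − λ_j)² e^{−t ∑_i λ_i²} dλ = t^{−n²/2} π^{n/2} 2^{n(1−n)/2} ∏_{j=1}^n j!. -/

import Mathlib

open Polynomial MeasureTheory Real Filter

noncomputable def gss (x : ℝ) : ℝ := Real.exp (-(x ^ 2 / 2))

lemma integrable_poly_gss (P : ℝ[X]) : Integrable (fun x => P.eval x * gss x) := by
  have h : ∀ k : ℕ, Integrable (fun x : ℝ => x ^ k * gss x) := by
    intro k
    have := integrable_rpow_mul_exp_neg_mul_sq (b := (1:ℝ)/2) (by norm_num) (s := (k : ℝ))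
      (lt_of_lt_of_le (by norm_num) (Nat.cast_nonneg k))
    refine this.congr ?_
    filter_upwards with x
    rw [Real.rpow_natCast]
    unfold gss
    ring_nf
  have : (fun x => P.eval x * gss x)
      = fun x => ∑ k ∈ Finset.range (P.natDegree + 1), P.coeff k * (x ^ k * gss x) := by
    funext x
    rw [Polynomial.eval_eq_sum_range, Finset.sum_mul]
    simp [mul_assoc]
  rw [this]
  exact integrable_finset_sum _ fun k _ => (h k).const_mul _

lemma deriv_iter_gss (k : ℕ) :
    deriv^[k] gss = fun x => (-1 : ℝ) ^ k * (Polynomial.aeval x (hermite k)) * gss x := by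
  funext x
  exact Polynomial.deriv_gaussian_eq_hermite_mul_gaussian k x

lemma aeval_hermite_eq_eval (k : ℕ) (x : ℝ) :
    Polynomial.aeval x (hermite k) = ((hermite k).map (Int.castRingHom ℝ)).eval x := by
  simp [Polynomial.aeval_def, Polynomial.eval₂_eq_eval_map]

noncomputable def Hr (k : ℕ) : ℝ[X] := (hermite k).map (Int.castRingHom ℝ)

lemma deriv_iter_gss' (k : ℕ) :
    deriv^[k] gss = fun x => (-1 : ℝ) ^ k * (Hr k).eval x * gss x := by
  rw [deriv_iter_gss k]
  funext x
  rw [aeval_hermite_eq_eval]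
  rfl

lemma integrable_poly_mul_dgss (P : ℝ[X]) (k : ℕ) :
    Integrable (fun x => P.eval x * deriv^[k] gss x) := by
  rw [deriv_iter_gss']
  have := integrable_poly_gss (Polynomial.C ((-1:ℝ)^k) * P * Hr k)
  refine this.congr ?_
  filter_upwards with x
  simp only [Polynomial.eval_mul, Polynomial.eval_C]
  ring

lemma differentiable_deriv_iter_gss (k : ℕ) : Differentiable ℝ (deriv^[k] gss) := by
  rw [deriv_iter_gss']
  have h1 : Differentiable ℝ (fun x : ℝ => (-1:ℝ)^k * (Hr k).eval x) :=
    ((Hr k).differentiable).const_mul _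
  have h2 : Differentiable ℝ gss := by
    unfold gss
    fun_prop
  exact h1.mul h2

lemma ibp_step (P : ℝ[X]) (k : ℕ) :
    ∫ x, P.eval x * deriv^[k+1] gss x = - ∫ x, P.derivative.eval x * deriv^[k] gss x := by
  have hv : ∀ x : ℝ, HasDerivAt (deriv^[k] gss) (deriv^[k+1] gss x) x := by
    intro x
    rw [Function.iterate_succ_apply']
    exact (differentiable_deriv_iter_gss k x).hasDerivAt
  exact integral_mul_deriv_eq_deriv_mul_of_integrable
    (fun x _ => P.hasDerivAt x) (fun x _ => hv x)
    (integrable_poly_mul_dgss P (k+1))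
    (integrable_poly_mul_dgss P.derivative k)
    (integrable_poly_mul_dgss P k)

lemma ibp_iter (P : ℝ[X]) (m : ℕ) :
    ∫ x, P.eval x * deriv^[m] gss x
      = (-1:ℝ)^m * ∫ x, (Polynomial.derivative^[m] P).eval x * gss x := by
  induction m generalizing P with
  | zero => simp
  | succ m ih =>
      have h1 : ∀ x, deriv^[m+1] gss x = deriv^[m] (deriv gss) x := by
        intro x; rw [Function.iterate_succ_apply]
      calc ∫ x, P.eval x * deriv^[m+1] gss x
          = - ∫ x, P.derivative.eval x * deriv^[m] gss x := ibp_step P m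
        _ = (-1:ℝ)^(m+1) * ∫ x, (Polynomial.derivative^[m+1] P).eval x * gss x := by
            rw [ih P.derivative]
            rw [Function.iterate_succ_apply]
            ring

lemma iterate_derivative_add' (p q : ℝ[X]) (m : ℕ) :
    Polynomial.derivative^[m] (p + q)
      = Polynomial.derivative^[m] p + Polynomial.derivative^[m] q := by
  induction m generalizing p q with
  | zero => simp
  | succ m ih => simp [Function.iterate_succ_apply, ih]

lemma iterate_derivative_monic {P : ℝ[X]} {m : ℕ} (hP : P.Monic) (hd : P.natDegree = m) :
    Polynomial.derivative^[m] P = Polynomial.C (m.factorial : ℝ) := by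
  have hsplit : P = P.eraseLead + Polynomial.C P.leadingCoeff * Polynomial.X ^ P.natDegree :=
    (Polynomial.eraseLead_add_C_mul_X_pow P).symm
  rcases Nat.eq_zero_or_pos m with hm | hm
  · subst hm
    have : P = 1 := hP.natDegree_eq_zero.mp hd
    simp [this]
  · have hlc : P.leadingCoeff = 1 := hP
    rw [hsplit, iterate_derivative_add', hlc, map_one, one_mul, hd]
    have herase : Polynomial.derivative^[m] P.eraseLead = 0 := by
      apply Polynomial.iterate_derivative_eq_zero
      calc P.eraseLead.natDegree ≤ P.natDegree - 1 := Polynomial.eraseLead_natDegree_le P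
        _ < m := by omega
    rw [herase, Polynomial.iterate_derivative_X_pow_eq_C_mul]
    simp [Nat.descFactorial_self]

lemma Hr_monic (k : ℕ) : (Hr k).Monic := (hermite_monic k).map _

lemma Hr_natDegree (k : ℕ) : (Hr k).natDegree = k := by
  rw [Hr, (hermite_monic k).natDegree_map, natDegree_hermite]

lemma integral_gss : ∫ x, gss x = Real.sqrt (2 * Real.pi) := by
  have := integral_gaussian (1/2)
  have h2 : ∀ x : ℝ, gss x = Real.exp (-(1/2) * x ^ 2) := by
    intro x; unfold gss; ring_nf
  simp_rw [h2, this]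
  rw [div_div_eq_mul_div, div_one, mul_comm]

lemma orthog_le {m k : ℕ} (hmk : m ≤ k) :
    ∫ x, (Hr m).eval x * (Hr k).eval x * gss x
      = if m = k then (k.factorial : ℝ) * Real.sqrt (2 * Real.pi) else 0 := by
  have key : (fun x => (Hr m).eval x * (Hr k).eval x * gss x)
      = fun x => (-1:ℝ)^k * ((Hr m).eval x * deriv^[k] gss x) := by
    funext x
    rw [deriv_iter_gss' k]
    ring_nf
    rw [pow_mul']
    norm_num
  rw [key, MeasureTheory.integral_const_mul, ibp_iter]
  rcases eq_or_lt_of_le hmk with rfl | hlt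
  · rw [iterate_derivative_monic (Hr_monic m) (Hr_natDegree m)]
    simp only [if_pos rfl, Polynomial.eval_C]
    rw [MeasureTheory.integral_const_mul, integral_gss]
    rw [← mul_assoc, ← mul_pow, neg_mul_neg, one_mul, one_pow, one_mul]
    simp
  · rw [Polynomial.iterate_derivative_eq_zero (by rw [Hr_natDegree]; exact hlt)]
    simp [if_neg (Nat.ne_of_lt hlt)]

lemma orthog (m k : ℕ) :
    ∫ x, (Hr m).eval x * (Hr k).eval x * gss x
      = if m = k then (k.factorial : ℝ) * Real.sqrt (2 * Real.pi) else 0 := by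
  rcases le_total m k with h | h
  · exact orthog_le h
  · have := orthog_le h
    simp_rw [mul_comm ((Hr k).eval _) ((Hr m).eval _)] at this
    rw [this]
    rcases eq_or_lt_of_le h with rfl | hlt
    · simp
    · rw [if_neg hlt.ne, if_neg hlt.ne']

open Finset in
lemma prod_pairs_lt {n : ℕ} (f : Fin n → Fin n → ℝ) :
    ∏ p ∈ Finset.univ.filter (fun p : Fin n × Fin n => p.1 < p.2), f p.1 p.2
      = ∏ i, ∏ j ∈ Finset.Ioi i, f i j := by
  rw [Finset.prod_sigma']
  refine Finset.prod_nbij' (fun p => ⟨p.1, p.2⟩) (fun q => (q.1, q.2)) ?_ ?_ ?_ ?_ ?_ <;>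
    simp [Finset.mem_filter, Finset.mem_sigma]

lemma vdm_sq {n : ℕ} (lam : Fin n → ℝ) :
    (∏ p ∈ Finset.univ.filter (fun p : Fin n × Fin n => p.1 < p.2),
        (lam p.1 - lam p.2) ^ 2)
      = (Matrix.det (Matrix.vandermonde lam)) ^ 2 := by
  rw [Matrix.det_vandermonde, prod_pairs_lt (fun i j => (lam i - lam j)^2)]
  rw [← Finset.prod_pow]
  refine Finset.prod_congr rfl fun i _ => ?_
  rw [← Finset.prod_pow]
  exact Finset.prod_congr rfl fun j _ => by ring

lemma det_hermite {n : ℕ} (lam : Fin n → ℝ) :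
    Matrix.det (Matrix.vandermonde lam)
      = ∑ σ : Equiv.Perm (Fin n),
          ((Equiv.Perm.sign σ : ℤ) : ℝ) * ∏ i, (Hr (σ i : ℕ)).eval (lam i) := by
  rw [Matrix.det_eval_matrixOfPolynomials_eq_det_vandermonde lam (fun j => Hr (j : ℕ))
      (fun j => Hr_natDegree (j : ℕ)) (fun j => Hr_monic (j : ℕ))]
  rw [← Matrix.det_transpose, Matrix.det_apply]
  refine Finset.sum_congr rfl fun σ _ => ?_
  simp [Units.smul_def, zsmul_eq_mul]

lemma integrable_hhg (a b : ℕ) :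
    Integrable (fun x => (Hr a).eval x * (Hr b).eval x * gss x) := by
  refine (integrable_poly_gss (Hr a * Hr b)).congr ?_
  filter_upwards with x
  simp [mul_assoc]

lemma mehta_unit (n : ℕ) :
    (∫ lam : Fin n → ℝ,
        (∏ p ∈ Finset.univ.filter (fun p : Fin n × Fin n => p.1 < p.2),
          (lam p.1 - lam p.2) ^ 2) * ∏ i, gss (lam i))
      = (n.factorial : ℝ) * ∏ i : Fin n, (((i : ℕ).factorial : ℝ) * Real.sqrt (2 * Real.pi)) := by
  classical
  set ε : Equiv.Perm (Fin n) → ℝ := fun σ => ((Equiv.Perm.sign σ : ℤ) : ℝ) with hε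
  have hexp : ∀ lam : Fin n → ℝ,
      (∏ p ∈ Finset.univ.filter (fun p : Fin n × Fin n => p.1 < p.2),
          (lam p.1 - lam p.2) ^ 2) * ∏ i, gss (lam i)
        = ∑ σ : Equiv.Perm (Fin n), ∑ τ : Equiv.Perm (Fin n),
            (ε σ * ε τ) *
              ∏ i, ((Hr (σ i : ℕ)).eval (lam i) * (Hr (τ i : ℕ)).eval (lam i) * gss (lam i)) := by
    intro lam
    rw [vdm_sq, det_hermite, sq, Finset.sum_mul_sum, Finset.sum_mul]
    refine Finset.sum_congr rfl fun σ _ => ?_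
    rw [Finset.sum_mul]
    refine Finset.sum_congr rfl fun τ _ => ?_
    simp only [Finset.prod_mul_distrib]
    ring
  simp_rw [hexp]
  have hint : ∀ σ τ : Equiv.Perm (Fin n),
      Integrable (fun lam : Fin n → ℝ =>
        ∏ i, ((Hr (σ i : ℕ)).eval (lam i) * (Hr (τ i : ℕ)).eval (lam i) * gss (lam i))) :=
    fun σ τ => MeasureTheory.Integrable.fin_nat_prod
      (fun i => integrable_hhg (σ i : ℕ) (τ i : ℕ))
  rw [MeasureTheory.integral_finset_sum _
    (fun σ _ => integrable_finset_sum _ (fun τ _ => ((hint σ τ).const_mul _)))]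
  have step : ∀ σ τ : Equiv.Perm (Fin n),
      (∫ lam : Fin n → ℝ, (ε σ * ε τ) *
          ∏ i, ((Hr (σ i : ℕ)).eval (lam i) * (Hr (τ i : ℕ)).eval (lam i) * gss (lam i)))
        = (ε σ * ε τ) *
            ∏ i : Fin n, (if (σ i : ℕ) = (τ i : ℕ)
              then ((τ i : ℕ).factorial : ℝ) * Real.sqrt (2 * Real.pi) else 0) := by
    intro σ τ
    rw [MeasureTheory.integral_const_mul, MeasureTheory.volume_pi,
      MeasureTheory.integral_fin_nat_prod_eq_prod
        (f := fun i x => (Hr (σ i : ℕ)).eval x * (Hr (τ i : ℕ)).eval x * gss x)]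
    congr 1
    exact Finset.prod_congr rfl fun i _ => orthog (σ i : ℕ) (τ i : ℕ)
  calc (∑ σ : Equiv.Perm (Fin n), ∫ lam : Fin n → ℝ, ∑ τ : Equiv.Perm (Fin n), (ε σ * ε τ) *
          ∏ i, ((Hr (σ i : ℕ)).eval (lam i) * (Hr (τ i : ℕ)).eval (lam i) * gss (lam i)))
      = ∑ σ : Equiv.Perm (Fin n), ∑ τ : Equiv.Perm (Fin n), (ε σ * ε τ) *
          ∏ i : Fin n, (if (σ i : ℕ) = (τ i : ℕ)
            then ((τ i : ℕ).factorial : ℝ) * Real.sqrt (2 * Real.pi) else 0) := by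
        refine Finset.sum_congr rfl fun σ _ => ?_
        rw [MeasureTheory.integral_finset_sum _ (fun τ _ => (hint σ τ).const_mul _)]
        exact Finset.sum_congr rfl fun τ _ => step σ τ
    _ = ∑ σ : Equiv.Perm (Fin n),
          ∏ i : Fin n, (((i : ℕ).factorial : ℝ) * Real.sqrt (2 * Real.pi)) := by
        refine Finset.sum_congr rfl fun σ _ => ?_
        rw [Finset.sum_eq_single σ]
        · have hsq : ε σ * ε σ = 1 := by
            rw [hε]
            rw [← Int.cast_mul, ← Units.val_mul, ← pow_two]
            simp
          rw [hsq, one_mul]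
          have : ∀ i : Fin n, (if (σ i : ℕ) = (σ i : ℕ)
              then ((σ i : ℕ).factorial : ℝ) * Real.sqrt (2 * Real.pi) else 0)
            = ((σ i : ℕ).factorial : ℝ) * Real.sqrt (2 * Real.pi) := fun i => if_pos rfl
          rw [Finset.prod_congr rfl (fun i _ => this i)]
          exact Equiv.prod_comp σ (fun i => (((i : ℕ).factorial : ℝ) * Real.sqrt (2 * Real.pi)))
        · intro τ _ hτσ
          have : ∃ i, σ i ≠ τ i := by
            by_contra h
            push_neg at h
            exact hτσ ((Equiv.ext h).symm)
          obtain ⟨i, hi⟩ := this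
          have hcond : ¬ ((σ i : ℕ) = (τ i : ℕ)) := by
            simpa [Fin.val_inj] using hi
          have h0 : (∏ i : Fin n, (if (σ i : ℕ) = (τ i : ℕ)
              then ((τ i : ℕ).factorial : ℝ) * Real.sqrt (2 * Real.pi) else 0)) = 0 :=
            Finset.prod_eq_zero (Finset.mem_univ i) (if_neg hcond)
          rw [h0, mul_zero]
        · intro h
          exact absurd (Finset.mem_univ σ) h
    _ = (n.factorial : ℝ) * ∏ i : Fin n, (((i : ℕ).factorial : ℝ) * Real.sqrt (2 * Real.pi)) := by
        rw [Finset.sum_const, Finset.card_univ, nsmul_eq_mul]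
        congr 1
        rw [Fintype.card_perm, Fintype.card_fin]

lemma card_pairs (n : ℕ) :
    2 * (Finset.univ.filter (fun p : Fin n × Fin n => p.1 < p.2)).card = n * n - n := by
  have h : (Finset.univ.filter (fun p : Fin n × Fin n => p.1 < p.2)).card
      = ∑ i : Fin n, (Finset.Ioi i).card := by
    rw [← Finset.card_sigma]
    apply Finset.card_nbij' (fun p => ⟨p.1, p.2⟩) (fun q => (q.1, q.2)) <;>
      simp [Finset.mem_filter, Finset.mem_sigma, Set.MapsTo, Set.LeftInvOn, Set.RightInvOn]
  rw [h]
  simp_rw [Fin.card_Ioi]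
  rw [Fin.sum_univ_eq_sum_range (fun i => n - 1 - i)]
  have hrefl : ∑ i ∈ Finset.range n, (n - 1 - i) = ∑ i ∈ Finset.range n, i := by
    rcases Nat.eq_zero_or_pos n with rfl | hn
    · simp
    · have := Finset.sum_range_reflect (fun i => i) n
      rw [← this]
  rw [hrefl, mul_comm, Finset.sum_range_id_mul_two]
  rcases n with _ | m
  · simp
  · simp [Nat.succ_mul, Nat.mul_succ]

lemma prod_fact (n : ℕ) :
    ∏ j ∈ Finset.range n, (j + 1).factorial
      = n.factorial * ∏ j ∈ Finset.range n, j.factorial := by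
  induction n with
  | zero => simp
  | succ m ih =>
      rw [Finset.prod_range_succ, ih, Finset.prod_range_succ]
      rw [Nat.factorial_succ]
      ring



/-- Mehta's Gaussian integral: for `t > 0`,
`∫_{ℝ^n} ∏_{i<j} (λ_i - λ_j)² e^{-t ∑_i λ_i²} dλ
  = t^{-n²/2} π^{n/2} 2^{n(1-n)/2} ∏_{j=1}^n j!`. -/
theorem stmt15 (n : ℕ) (t : ℝ) (ht : 0 < t) :
    ∫ lam : Fin n → ℝ,
        (∏ p ∈ Finset.univ.filter (fun p : Fin n × Fin n => p.1 < p.2),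
          (lam p.1 - lam p.2) ^ 2) *
          Real.exp (-t * ∑ i, (lam i) ^ 2) =
      t ^ (-((n : ℝ) ^ 2) / 2) * Real.pi ^ ((n : ℝ) / 2) *
        (2 : ℝ) ^ ((n : ℝ) * (1 - (n : ℝ)) / 2) *
        ∏ j ∈ Finset.range n, (Nat.factorial (j + 1) : ℝ) := by
  classical
  set K := (Finset.univ.filter (fun p : Fin n × Fin n => p.1 < p.2)).card with hK
  set c : ℝ := (2 * t) ^ (-(1:ℝ)/2) with hcdef
  have h2t : (0:ℝ) < 2 * t := by linarith
  have hc : 0 < c := Real.rpow_pos_of_pos h2t _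
  have hc2 : c ^ 2 = (2 * t)⁻¹ := by
    rw [hcdef, ← Real.rpow_natCast _ 2, ← Real.rpow_mul h2t.le]
    norm_num
    rw [Real.rpow_neg_one, mul_inv]
    ring
  set F : (Fin n → ℝ) → ℝ := fun lam =>
    (∏ p ∈ Finset.univ.filter (fun p : Fin n × Fin n => p.1 < p.2), (lam p.1 - lam p.2) ^ 2) *
      Real.exp (-t * ∑ i, (lam i) ^ 2) with hF
  have key : ∀ x : Fin n → ℝ, F (c • x)
      = (c ^ 2) ^ K *
        ((∏ p ∈ Finset.univ.filter (fun p : Fin n × Fin n => p.1 < p.2), (x p.1 - x p.2) ^ 2) *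
          ∏ i, gss (x i)) := by
    intro x
    have hprod : (∏ p ∈ Finset.univ.filter (fun p : Fin n × Fin n => p.1 < p.2),
          ((c • x) p.1 - (c • x) p.2) ^ 2)
        = (c ^ 2) ^ K *
          ∏ p ∈ Finset.univ.filter (fun p : Fin n × Fin n => p.1 < p.2), (x p.1 - x p.2) ^ 2 := by
      rw [hK, ← Finset.prod_const, ← Finset.prod_mul_distrib]
      refine Finset.prod_congr rfl fun p _ => ?_
      simp only [Pi.smul_apply, smul_eq_mul]
      ring
    have hexp : Real.exp (-t * ∑ i, ((c • x) i) ^ 2) = ∏ i, gss (x i) := by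
      unfold gss
      rw [← Real.exp_sum]
      congr 1
      have htc : t * c ^ 2 = 1 / 2 := by
        rw [hc2, mul_inv]
        field_simp
      rw [Finset.mul_sum]
      refine Finset.sum_congr rfl fun i _ => ?_
      simp only [Pi.smul_apply, smul_eq_mul]
      have h5 : -t * (c * x i) ^ 2 = -((t * c ^ 2) * x i ^ 2) := by ring
      rw [h5, htc]
      ring
    rw [hF]
    simp only
    rw [hprod, hexp]
    ring
  have hs : ∫ x : Fin n → ℝ, F (c • x) = |(c ^ n)⁻¹| • ∫ x, F x := by
    have := MeasureTheory.Measure.integral_comp_smul (volume : Measure (Fin n → ℝ)) F c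
    simpa [Module.finrank_fin_fun] using this
  have h1 : ∫ x : Fin n → ℝ, F (c • x)
      = (c ^ 2) ^ K * ((n.factorial : ℝ) *
          ∏ i : Fin n, (((i : ℕ).factorial : ℝ) * Real.sqrt (2 * Real.pi))) := by
    simp_rw [key]
    rw [MeasureTheory.integral_const_mul, mehta_unit]
  have habs : |(c ^ n)⁻¹| = (c ^ n)⁻¹ := abs_of_pos (by positivity)
  have hmain : ∫ x, F x = c ^ n * ∫ x : Fin n → ℝ, F (c • x) := by
    rw [hs, habs, smul_eq_mul, ← mul_assoc, mul_inv_cancel₀ (pow_ne_zero _ hc.ne'), one_mul]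
  show ∫ x, F x = _
  rw [hmain, h1]
  -- arithmetic
  have hnn : n ≤ n * n := by
    rcases n with _ | m
    · simp
    · exact Nat.le_mul_of_pos_left _ (Nat.succ_pos m)
  have hcpow : c ^ n * (c ^ 2) ^ K = c ^ (n * n) := by
    rw [← pow_mul, ← pow_add]
    congr 1
    have := card_pairs n
    omega
  have hprodfact : (∏ i : Fin n, (((i : ℕ).factorial : ℝ) * Real.sqrt (2 * Real.pi)))
      = (∏ i : Fin n, ((i : ℕ).factorial : ℝ)) * (Real.sqrt (2 * Real.pi)) ^ n := by
    rw [Finset.prod_mul_distrib, Finset.prod_const, Finset.card_univ, Fintype.card_fin]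
  have hfact : (n.factorial : ℝ) * ∏ i : Fin n, ((i : ℕ).factorial : ℝ)
      = ∏ j ∈ Finset.range n, ((j + 1).factorial : ℝ) := by
    rw [Fin.prod_univ_eq_prod_range (fun j => ((j).factorial : ℝ)) n]
    rw [← Nat.cast_prod, ← Nat.cast_prod, ← Nat.cast_mul, prod_fact]
  have hcnn : c ^ (n * n) = 2 ^ (-((n : ℝ) ^ 2) / 2) * t ^ (-((n : ℝ) ^ 2) / 2) := by
    rw [hcdef, ← Real.rpow_natCast _ (n * n), ← Real.rpow_mul h2t.le,
      Real.mul_rpow (by norm_num) ht.le]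
    congr 2 <;> push_cast <;> ring
  have hsqrt : (Real.sqrt (2 * Real.pi)) ^ n = 2 ^ ((n : ℝ) / 2) * Real.pi ^ ((n : ℝ) / 2) := by
    rw [Real.sqrt_eq_rpow, ← Real.rpow_natCast _ n, ← Real.rpow_mul (by positivity),
      Real.mul_rpow (by norm_num) Real.pi_pos.le]
    congr 2 <;> ring
  have h2comb : (2 : ℝ) ^ (-((n : ℝ) ^ 2) / 2) * 2 ^ ((n : ℝ) / 2)
      = 2 ^ ((n : ℝ) * (1 - (n : ℝ)) / 2) := by
    rw [← Real.rpow_add two_pos]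
    congr 1
    ring
  calc c ^ n * ((c ^ 2) ^ K * ((n.factorial : ℝ) *
          ∏ i : Fin n, (((i : ℕ).factorial : ℝ) * Real.sqrt (2 * Real.pi))))
      = c ^ (n * n) * (((n.factorial : ℝ) * ∏ i : Fin n, ((i : ℕ).factorial : ℝ)) *
          (Real.sqrt (2 * Real.pi)) ^ n) := by
        rw [hprodfact, ← hcpow]
        ring
    _ = (2 ^ (-((n : ℝ) ^ 2) / 2) * t ^ (-((n : ℝ) ^ 2) / 2)) *
          ((∏ j ∈ Finset.range n, ((j + 1).factorial : ℝ)) *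
            (2 ^ ((n : ℝ) / 2) * Real.pi ^ ((n : ℝ) / 2))) := by
        rw [hcnn, hsqrt, hfact]
    _ = t ^ (-((n : ℝ) ^ 2) / 2) * Real.pi ^ ((n : ℝ) / 2) *
          (2 : ℝ) ^ ((n : ℝ) * (1 - (n : ℝ)) / 2) *
          ∏ j ∈ Finset.range n, ((j + 1).factorial : ℝ) := by
        rw [← h2comb]
        ring
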